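/- Let A be a symmetric positive definite n×n real matrix, B an m×n real matrix of full row rank, W a symmetric positive definite m×m real matrix, and γ > 0. Define A_γ := A + γ Bᵀ W⁻¹ B, S := B A⁻¹ Bᵀ, and S_γ := B A_γ⁻¹ Bᵀ. Then S_γ⁻¹ = S⁻¹ + γ W⁻¹. -/

import Mathlib

open Matrix

lemma smul_posSemidef_aux {k : ℕ} {P : Matrix (Fin k) (Fin k) ℝ}
    (hP : P.PosSemidef) {c : ℝ} (hc : 0 ≤ c) : (c • P).PosSemidef := by
  constructor
  · show (c • P)ᴴ = c • P
    rw [conjTranspose_smul, hP.1.eq]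
    simp
  · intro x
    have := hP.2 x
    exact (hP.smul hc).2 x

lemma posDef_mul_mul_transpose {k l : ℕ} {P : Matrix (Fin l) (Fin l) ℝ}
    (hP : P.PosDef) (B : Matrix (Fin k) (Fin l) ℝ) (hB : B.rank = k) :
    (B * P * Bᵀ).PosDef := by
  have hBv : Function.Injective B.vecMul := by
    rw [Matrix.vecMul_injective_iff]
    rw [linearIndependent_iff_card_eq_finrank_span]
    rw [B.rank_eq_finrank_span_row] at hB
    simp [Set.finrank, ← hB]
  constructor
  · have h1 : (B * P * Bᴴ).IsHermitian := isHermitian_mul_mul_conjTranspose B hP.1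
    simpa using h1
  · have h2 := (hP.mul_mul_conjTranspose_same hBv).2
    simpa using h2

/-- Sherman–Morrison–Woodbury identity for the augmented Schur complement:
`Sγ⁻¹ = S⁻¹ + γ W⁻¹` (equation (3.3)). -/
theorem stmt_4 {n m : ℕ} (A : Matrix (Fin n) (Fin n) ℝ)
    (B : Matrix (Fin m) (Fin n) ℝ) (W : Matrix (Fin m) (Fin m) ℝ)
    (hA : A.PosDef) (hW : W.PosDef) (hB : B.rank = m)
    (γ : ℝ) (hγ : 0 < γ)
    (Aγ : Matrix (Fin n) (Fin n) ℝ) (hAγ : Aγ = A + γ • (Bᵀ * W⁻¹ * B))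
    (S Sγ : Matrix (Fin m) (Fin m) ℝ)
    (hS : S = B * A⁻¹ * Bᵀ) (hSγ : Sγ = B * Aγ⁻¹ * Bᵀ) :
    Sγ⁻¹ = S⁻¹ + γ • W⁻¹ := by
  haveI : Invertible A := A.invertibleOfIsUnitDet (isUnit_iff_ne_zero.mpr hA.det_pos.ne')
  haveI : Invertible W := W.invertibleOfIsUnitDet (isUnit_iff_ne_zero.mpr hW.det_pos.ne')
  have hSpd : S.PosDef := by
    rw [hS]; exact posDef_mul_mul_transpose hA.inv B (by simpa using hB)
  haveI : Invertible S := S.invertibleOfIsUnitDet (isUnit_iff_ne_zero.mpr hSpd.det_pos.ne')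
  set M : Matrix (Fin m) (Fin m) ℝ := W + γ • S with hM
  have hMpd : M.PosDef := hW.add_posSemidef (smul_posSemidef_aux hSpd.posSemidef hγ.le)
  haveI : Invertible M := M.invertibleOfIsUnitDet (isUnit_iff_ne_zero.mpr hMpd.det_pos.ne')
  have hAγpd : Aγ.PosDef := by
    rw [hAγ]
    refine hA.add_posSemidef ?_
    have h := hW.inv.posSemidef.conjTranspose_mul_mul_same B
    have h' : (Bᵀ * W⁻¹ * B).PosSemidef := by simpa using h
    exact smul_posSemidef_aux h' hγ.le
  haveI : Invertible Aγ := Aγ.invertibleOfIsUnitDet (isUnit_iff_ne_zero.mpr hAγpd.det_pos.ne')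
  -- key identity : Aγ * (A⁻¹ * Bᵀ) = Bᵀ * W⁻¹ * M
  have key : Aγ * (A⁻¹ * Bᵀ) = Bᵀ * W⁻¹ * M := by
    calc Aγ * (A⁻¹ * Bᵀ)
        = A * (A⁻¹ * Bᵀ) + γ • (Bᵀ * W⁻¹ * B * (A⁻¹ * Bᵀ)) := by
          rw [hAγ, Matrix.add_mul, Matrix.smul_mul]
      _ = Bᵀ + γ • (Bᵀ * W⁻¹ * S) := by
          rw [Matrix.mul_inv_cancel_left_of_invertible, hS,
            Matrix.mul_assoc (Bᵀ * W⁻¹) B (A⁻¹ * Bᵀ), ← Matrix.mul_assoc B A⁻¹ Bᵀ]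
      _ = Bᵀ * W⁻¹ * M := by
          rw [hM, Matrix.mul_add, Matrix.mul_smul, Matrix.mul_assoc Bᵀ W⁻¹ W,
            Matrix.inv_mul_of_invertible, Matrix.mul_one]
  have key2 : Aγ⁻¹ * Bᵀ = A⁻¹ * Bᵀ * M⁻¹ * W := by
    have h2 : A⁻¹ * Bᵀ = Aγ⁻¹ * (Bᵀ * W⁻¹ * M) := by
      rw [← key, Matrix.inv_mul_cancel_left_of_invertible]
    rw [h2, Matrix.mul_assoc Aγ⁻¹ (Bᵀ * W⁻¹ * M) M⁻¹,
      Matrix.mul_inv_cancel_right_of_invertible,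
      Matrix.mul_assoc Aγ⁻¹ (Bᵀ * W⁻¹) W, Matrix.inv_mul_cancel_right_of_invertible]
  have hSγ' : Sγ = S * M⁻¹ * W := by
    rw [hSγ, hS, Matrix.mul_assoc B Aγ⁻¹ Bᵀ, key2]
    simp only [← Matrix.mul_assoc]
  have main : Sγ * (S⁻¹ + γ • W⁻¹) = 1 := by
    have h1 : S * M⁻¹ * W * W⁻¹ = S * M⁻¹ :=
      Matrix.mul_inv_cancel_right_of_invertible (A := W) (S * M⁻¹)
    have h2 : S * M⁻¹ * (W + γ • S) * S⁻¹ = S * M⁻¹ * W * S⁻¹ + γ • (S * M⁻¹) := by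
      rw [Matrix.mul_add (S * M⁻¹), Matrix.add_mul, Matrix.mul_smul, Matrix.smul_mul,
        Matrix.mul_inv_cancel_right_of_invertible]
    rw [hSγ', Matrix.mul_add, Matrix.mul_smul, h1, ← h2, ← hM,
      Matrix.inv_mul_cancel_right_of_invertible, Matrix.mul_inv_of_invertible]
  exact Matrix.inv_eq_right_inv main
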